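/- arXiv:1407.6929 — 2 statements merged into one kernel-verified Lean document; each statement's English description precedes it below -/
import Mathlib

section
/- Let A be a unital C*-algebra and let τ : A → A be a linear map that is positive (τ(a) is positive whenever a is positive) and tracial (τ(ab) = τ(ba) for all a, b ∈ A). Suppose there exists an integer n₀ ≥ 2 with the following property: for every ε > 0 and every finite family a₁, …, a_k ∈ A there exist n₀ mutually orthogonal, pairwise equivalent projections p₁, …, p_{n₀} in A with p₁ + ⋯ + p_{n₀} = 1 such that τ((p_i a_j − a_j p_i)*(p_i a_j − a_j p_i)) ≤ ε·1 for all 1 ≤ i ≤ n₀ and 1 ≤ j ≤ k. Then for every ε > 0 and every finite family a₁, …, a_k ∈ A there exists a unitary u ∈ A such that τ(u) = 0 and τ((u a_j − a_j u)*(u a_j − a_j u)) ≤ ε·1 for all 1 ≤ j ≤ k. -/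
open scoped ComplexOrder

section Aux

variable {A : Type*} [CStarAlgebra A] [PartialOrder A] [StarOrderedRing A]

private lemma aux_cross (x y : A) :
    star x * y + star y * x ≤ star x * x + star y * y := by
  have h := star_mul_self_nonneg (x - y)
  have hexp : star (x - y) * (x - y)
      = (star x * x + star y * y) - (star x * y + star y * x) := by
    simp only [star_sub]
    noncomm_ring
  rw [hexp, sub_nonneg] at h
  exact h

private lemma aux_sum_sq {n : ℕ} (x : Fin n → A) :
    star (∑ i, x i) * (∑ i, x i) ≤ n • ∑ i, star (x i) * x i := by
  set T : A := star (∑ i, x i) * (∑ i, x i) with hT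
  set S : A := ∑ i, star (x i) * x i with hS
  have hTsum : T = ∑ i, ∑ j, star (x i) * x j := by
    rw [hT, star_sum, Finset.sum_mul_sum]
  have h2 : T + T ≤ n • S + n • S := by
    have hle : ∑ i, ∑ j, (star (x i) * x j + star (x j) * x i)
        ≤ ∑ i, ∑ j, (star (x i) * x i + star (x j) * x j) :=
      Finset.sum_le_sum fun i _ => Finset.sum_le_sum fun j _ => aux_cross (x i) (x j)
    have hswap : ∑ i, ∑ j, star (x j) * x i = T := by
      rw [hTsum]; exact Finset.sum_comm
    have hL : ∑ i, ∑ j, (star (x i) * x j + star (x j) * x i) = T + T := by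
      simp only [Finset.sum_add_distrib]
      rw [hswap, ← hTsum]
    have hR : ∑ i : Fin n, ∑ j : Fin n, (star (x i) * x i + star (x j) * x j)
        = n • S + n • S := by
      simp only [Finset.sum_add_distrib, Finset.sum_const, Finset.card_univ,
        Fintype.card_fin, ← Finset.smul_sum, ← hS]
    rw [hL, hR] at hle
    exact hle
  have h0 : 0 ≤ (2 : ℕ) • (n • S - T) := by
    have : (2 : ℕ) • (n • S - T) = (n • S + n • S) - (T + T) := by
      rw [smul_sub]
      abel
    rw [this, sub_nonneg]
    exact h2
  have key : (2⁻¹ : ℝ) • ((2 : ℕ) • (n • S - T)) = n • S - T := by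
    rw [← Nat.cast_smul_eq_nsmul ℝ 2 (n • S - T), smul_smul]
    norm_num
  have : 0 ≤ n • S - T := by
    rw [← key]
    exact smul_nonneg (by norm_num) h0
  exact sub_nonneg.mp this

end Aux

/-- Theorem 3.3, (iv) ⇒ (v), for a positive tracial linear map `τ`. -/
theorem stmt_0 {A : Type*} [CStarAlgebra A] [PartialOrder A] [StarOrderedRing A]
    (τ : A →ₗ[ℂ] A)
    (hτpos : ∀ a : A, 0 ≤ a → 0 ≤ τ a)
    (hτtr : ∀ a b : A, τ (a * b) = τ (b * a))
    (h : ∃ n₀ : ℕ, 2 ≤ n₀ ∧ ∀ (ε : ℝ), 0 < ε → ∀ (k : ℕ) (a : Fin k → A),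
      ∃ p : Fin n₀ → A,
        (∀ i, star (p i) = p i ∧ p i * p i = p i) ∧
        (∀ i i', i ≠ i' → p i * p i' = 0) ∧
        (∀ i i', ∃ v : A, star v * v = p i ∧ v * star v = p i') ∧
        (∑ i, p i = 1) ∧
        (∀ (i : Fin n₀) (j : Fin k),
          τ (star (p i * a j - a j * p i) * (p i * a j - a j * p i)) ≤ (ε : ℂ) • (1 : A))) :
    ∀ (ε : ℝ), 0 < ε → ∀ (k : ℕ) (a : Fin k → A),
      ∃ u : A, star u * u = 1 ∧ u * star u = 1 ∧ τ u = 0 ∧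
        ∀ j : Fin k,
          τ (star (u * a j - a j * u) * (u * a j - a j * u)) ≤ (ε : ℂ) • (1 : A) := by
  obtain ⟨n, hn2, hprop⟩ := h
  intro ε hε k a
  have hn0 : (n : ℝ) ≠ 0 := by positivity
  have hε' : 0 < ε / (n : ℝ) ^ 2 := by positivity
  obtain ⟨p, hproj, horth, hequiv, hsum, hcomm⟩ := hprop (ε / (n : ℝ) ^ 2) hε' k a
  set ζ : ℂ := Complex.exp (2 * Real.pi * Complex.I / n) with hζdef
  have habs : ‖ζ‖ = 1 := by
    have : (2 * Real.pi * Complex.I / n) = ((2 * Real.pi / n : ℝ) : ℂ) * Complex.I := by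
      push_cast; ring
    rw [hζdef, this, Complex.norm_exp_ofReal_mul_I]
  have hconj : ∀ m : ℕ, (starRingEnd ℂ) (ζ ^ m) * ζ ^ m = 1 := by
    intro m
    rw [mul_comm, Complex.mul_conj, Complex.normSq_eq_norm_sq, norm_pow, habs]
    norm_num
  set u : A := ∑ i : Fin n, (ζ ^ (i : ℕ)) • p i with hu
  have hstaru : star u = ∑ i : Fin n, ((starRingEnd ℂ) (ζ ^ (i : ℕ))) • p i := by
    rw [hu, star_sum]
    refine Finset.sum_congr rfl fun i _ => ?_
    rw [star_smul, (hproj i).1]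
    rfl
  -- product of two "diagonal" sums
  have hprodgen : ∀ (c d : Fin n → ℂ),
      (∑ i : Fin n, c i • p i) * (∑ i : Fin n, d i • p i)
        = ∑ i : Fin n, (c i * d i) • p i := by
    intro c d
    rw [Finset.sum_mul_sum]
    refine Finset.sum_congr rfl fun i _ => ?_
    rw [Finset.sum_eq_single i]
    · rw [smul_mul_smul_comm, (hproj i).2]
    · intro j _ hj
      rw [smul_mul_smul_comm, horth i j (Ne.symm hj), smul_zero]
    · intro hi; exact absurd (Finset.mem_univ i) hi
  have huu : star u * u = 1 := by
    rw [hstaru, hu, hprodgen]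
    simp only [hconj, one_smul]
    exact hsum
  have huu' : u * star u = 1 := by
    rw [hstaru, hu, hprodgen]
    have : ∀ m : ℕ, ζ ^ m * (starRingEnd ℂ) (ζ ^ m) = 1 := fun m => by
      rw [mul_comm]; exact hconj m
    simp only [this, one_smul]
    exact hsum
  -- τ of each projection is the same
  have i0 : Fin n := ⟨0, by omega⟩
  have hτp : ∀ i, τ (p i) = τ (p i0) := by
    intro i
    obtain ⟨v, hv1, hv2⟩ := hequiv i i0
    rw [← hv1, ← hv2, hτtr]
  have hτu : τ u = 0 := by
    rw [hu, map_sum]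
    simp only [map_smul]
    have : ∑ i : Fin n, (ζ ^ (i : ℕ)) • τ (p i)
        = (∑ i : Fin n, ζ ^ (i : ℕ)) • τ (p i0) := by
      rw [Finset.sum_smul]
      exact Finset.sum_congr rfl fun i _ => by rw [hτp i]
    rw [this]
    have hgeom : ∑ i : Fin n, ζ ^ (i : ℕ) = 0 := by
      rw [Fin.sum_univ_eq_sum_range]
      exact (Complex.isPrimitiveRoot_exp n (by omega)).geom_sum_eq_zero (by omega)
    rw [hgeom, zero_smul]
  refine ⟨u, huu, huu', hτu, fun j => ?_⟩
  -- the commutator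
  set d : Fin n → A := fun i => p i * a j - a j * p i with hd
  have hcommu : u * a j - a j * u = ∑ i : Fin n, (ζ ^ (i : ℕ)) • d i := by
    rw [hu, Finset.sum_mul, Finset.mul_sum, ← Finset.sum_sub_distrib]
    refine Finset.sum_congr rfl fun i _ => ?_
    rw [hd, smul_sub, smul_mul_assoc, mul_smul_comm]
  have hmono : ∀ x y : A, x ≤ y → τ x ≤ τ y := by
    intro x y hxy
    have := hτpos _ (sub_nonneg.2 hxy)
    rw [map_sub] at this
    exact sub_nonneg.mp this
  -- apply the sum-square inequality
  have hsq : star (u * a j - a j * u) * (u * a j - a j * u)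
      ≤ n • ∑ i : Fin n, star (d i) * d i := by
    rw [hcommu]
    have := aux_sum_sq (fun i : Fin n => (ζ ^ (i : ℕ)) • d i)
    refine le_trans this ?_
    have : ∀ i : Fin n, star ((ζ ^ (i : ℕ)) • d i) * ((ζ ^ (i : ℕ)) • d i)
        = star (d i) * d i := by
      intro i
      rw [star_smul, smul_mul_smul_comm]
      have : star (ζ ^ (i : ℕ)) * ζ ^ (i : ℕ) = 1 := hconj (i : ℕ)
      rw [this, one_smul]
    rw [Finset.sum_congr rfl fun i _ => this i]
  have step1 : τ (star (u * a j - a j * u) * (u * a j - a j * u))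
      ≤ n • ∑ i : Fin n, τ (star (d i) * d i) := by
    refine le_trans (hmono _ _ hsq) ?_
    rw [map_nsmul, map_sum]
  have step2 : ∑ i : Fin n, τ (star (d i) * d i)
      ≤ n • (((ε / (n : ℝ) ^ 2 : ℝ) : ℂ) • (1 : A)) := by
    have : ∀ i : Fin n, τ (star (d i) * d i) ≤ ((ε / (n : ℝ) ^ 2 : ℝ) : ℂ) • (1 : A) :=
      fun i => hcomm i j
    calc ∑ i : Fin n, τ (star (d i) * d i)
        ≤ ∑ _i : Fin n, ((ε / (n : ℝ) ^ 2 : ℝ) : ℂ) • (1 : A) :=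
          Finset.sum_le_sum fun i _ => this i
      _ = n • (((ε / (n : ℝ) ^ 2 : ℝ) : ℂ) • (1 : A)) := by
          rw [Finset.sum_const, Finset.card_univ, Fintype.card_fin]
  have step3 : (n : ℕ) • ((n : ℕ) • (((ε / (n : ℝ) ^ 2 : ℝ) : ℂ) • (1 : A)))
      = (ε : ℂ) • (1 : A) := by
    rw [← Nat.cast_smul_eq_nsmul ℂ, ← Nat.cast_smul_eq_nsmul ℂ, smul_smul, smul_smul]
    congr 1
    push_cast
    field_simp
  refine le_trans step1 ?_
  calc n • ∑ i : Fin n, τ (star (d i) * d i)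
      ≤ n • (n • (((ε / (n : ℝ) ^ 2 : ℝ) : ℂ) • (1 : A))) :=
        nsmul_le_nsmul_right step2 n
    _ = (ε : ℂ) • (1 : A) := step3
end

section
/- Let A be a unital C*-algebra and let τ : A → A be a map with the Dixmier approximation property. Let x ∈ A and ε > 0, and suppose that ε·1 − τ(x*x) is a positive element of A. Then for every tracial state ρ on A one has ρ(x*x) ≤ 2ε. -/
open scoped ComplexOrder

/-- Lemma 3.5: if `τ` has the Dixmier approximation property and `τ(x*x) ≤ ε·1`,
then `ρ(x*x) ≤ 2ε` for every tracial state `ρ`. -/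
theorem stmt_3 {A : Type*} [CStarAlgebra A] [PartialOrder A] [StarOrderedRing A]
    (τ : A → A)
    (hdix : ∀ (a : A) (δ : ℝ), 0 < δ → ∃ (m : ℕ) (v : Fin m → A) (lam : Fin m → ℝ),
      (∀ j, star (v j) * v j = 1 ∧ v j * star (v j) = 1) ∧
      (∀ j, lam j ∈ Set.Icc (0 : ℝ) 1) ∧ (∑ j, lam j = 1) ∧
      ‖(∑ j, (lam j : ℂ) • (star (v j) * a * v j)) - τ a‖ < δ)
    (x : A) (ε : ℝ) (hε : 0 < ε)
    (hx : 0 ≤ (ε : ℂ) • (1 : A) - τ (star x * x)) :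
    ∀ (ρ : A →L[ℂ] ℂ), ρ 1 = 1 → (∀ y : A, 0 ≤ ρ (star y * y)) →
      (∀ a b : A, ρ (a * b) = ρ (b * a)) →
      ρ (star x * x) ≤ ((2 * ε : ℝ) : ℂ) := by
  intro ρ hρ1 hρpos htr
  set a := star x * x with ha
  -- ρ is nonneg on nonneg elements
  have hpos : ∀ p : A, 0 ≤ p → 0 ≤ ρ p := by
    intro p hp
    rw [StarOrderedRing.nonneg_iff] at hp
    induction hp using AddSubmonoid.closure_induction with
    | mem y hy => obtain ⟨s, rfl⟩ := hy; exact hρpos s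
    | zero => simp
    | add b c _ _ hb hc => rw [map_add]; exact add_nonneg hb hc
  have hmono : ∀ b c : A, b ≤ c → ρ b ≤ ρ c := by
    intro b c hbc
    have := hpos (c - b) (sub_nonneg.mpr hbc)
    rw [map_sub] at this
    exact sub_nonneg.mp this
  -- τ a is selfadjoint and ≤ ε • 1
  have hτle : τ a ≤ (ε : ℂ) • (1 : A) := sub_nonneg.mp hx
  have hτsa : IsSelfAdjoint (τ a) := by
    have h1 : IsSelfAdjoint ((ε : ℂ) • (1 : A) - τ a) := IsSelfAdjoint.of_nonneg hx
    have h2 : IsSelfAdjoint ((ε : ℂ) • (1 : A)) := by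
      rw [IsSelfAdjoint, star_smul, star_one, Complex.star_def, Complex.conj_ofReal]
    have := h2.sub h1
    simpa using this
  -- Dixmier data with δ = ε
  obtain ⟨m, v, lam, hv, hlam, hsum, hnear⟩ := hdix a ε hε
  set S : A := ∑ j, (lam j : ℂ) • (star (v j) * a * v j) with hS
  -- ρ S = ρ a by the trace property
  have hρS : ρ S = ρ a := by
    rw [hS, map_sum]
    have : ∀ j, ρ ((lam j : ℂ) • (star (v j) * a * v j)) = (lam j : ℂ) * ρ a := by
      intro j
      rw [map_smul, smul_eq_mul]
      congr 1
      calc ρ (star (v j) * a * v j) = ρ (v j * (star (v j) * a)) := htr _ _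
        _ = ρ (v j * star (v j) * a) := by rw [mul_assoc]
        _ = ρ a := by rw [(hv j).2, one_mul]
    simp_rw [this, ← Finset.sum_mul, ← Complex.ofReal_sum, hsum]
    simp
  -- S is selfadjoint
  have hasa : IsSelfAdjoint a := by rw [ha]; exact IsSelfAdjoint.star_mul_self x
  have hSsa : IsSelfAdjoint S := by
    rw [IsSelfAdjoint, hS, star_sum]
    refine Finset.sum_congr rfl fun j _ => ?_
    rw [star_smul, star_mul, star_mul, star_star, Complex.star_def, Complex.conj_ofReal,
      hasa.star_eq]
    simp [mul_assoc]
  -- d := S - τ a is selfadjoint with ‖d‖ < ε, hence d ≤ ε • 1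
  have hdsa : IsSelfAdjoint (S - τ a) := hSsa.sub hτsa
  have hdle : S - τ a ≤ (ε : ℂ) • (1 : A) := by
    calc S - τ a ≤ algebraMap ℝ A ‖S - τ a‖ := hdsa.le_algebraMap_norm_self
      _ ≤ (ε : ℂ) • (1 : A) := by
          have h1 : ((ε : ℂ) • (1 : A)) = algebraMap ℝ A ε := by
            rw [Algebra.algebraMap_eq_smul_one]
            norm_num
          rw [h1, Algebra.algebraMap_eq_smul_one, Algebra.algebraMap_eq_smul_one,
            ← sub_nonneg, ← sub_smul]
          exact smul_nonneg (by linarith [hnear]) zero_le_one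
  -- ρ of ε • 1 is ε
  have hρε : ρ ((ε : ℂ) • (1 : A)) = (ε : ℂ) := by
    rw [map_smul, hρ1, smul_eq_mul, mul_one]
  -- combine
  have h1 : ρ (τ a) ≤ (ε : ℂ) := hρε ▸ hmono _ _ hτle
  have h2 : ρ (S - τ a) ≤ (ε : ℂ) := hρε ▸ hmono _ _ hdle
  rw [map_sub] at h2
  have : ρ a = ρ (τ a) + (ρ S - ρ (τ a)) := by rw [← hρS]; ring
  rw [this]
  calc ρ (τ a) + (ρ S - ρ (τ a)) ≤ (ε : ℂ) + (ε : ℂ) := add_le_add h1 h2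
    _ = ((2 * ε : ℝ) : ℂ) := by push_cast; ring
end
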